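/- Let F be a field, d ≥ 2 an integer, and let L be a set of lines in F^d that is algebraically spread. Then for every field extension F' of F, the set of lines L, viewed inside (F')^d, is algebraically spread. -/

import Mathlib

/-- The Hasse derivative `H^α f`: the coefficient of `y^α` in `f(x+y)`. -/
noncomputable def mvHasseDeriv {F : Type*} [CommSemiring F] {d : ℕ}
    (α : Fin d →₀ ℕ) (f : MvPolynomial (Fin d) F) : MvPolynomial (Fin d) F :=
  MvPolynomial.coeff α
    (MvPolynomial.eval₂ (MvPolynomial.C.comp MvPolynomial.C)
      (fun i => MvPolynomial.X i + MvPolynomial.C (MvPolynomial.X i)) f)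

/-- `mult(f,p) ≥ n`: all Hasse derivatives of order `< n` vanish at `p`. -/
def MultGE {F : Type*} [CommSemiring F] {d : ℕ}
    (f : MvPolynomial (Fin d) F) (p : Fin d → F) (n : ℕ) : Prop :=
  ∀ α : Fin d →₀ ℕ, (∑ i, α i) < n → MvPolynomial.eval p (mvHasseDeriv α f) = 0

/-- A finite point set `P ⊆ F^r` is algebraically spread. -/
def AlgebraicallySpread (F : Type*) [Field F] (r : ℕ) (P : Set (Fin r → F)) : Prop :=
  P.Finite ∧ ∀ ε : ℝ, 0 < ε → ∃ n₀ : ℕ, ∀ n : ℕ, n₀ < n →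
    ∀ f : MvPolynomial (Fin r) F,
      (f.totalDegree : ℝ) < (1 - ε) * (P.ncard : ℝ) ^ ((1:ℝ)/(r:ℝ)) * (n:ℝ) →
      (∀ p ∈ P, MultGE f p n) → f = 0

/-- A point set `P` on an `r`-dimensional affine flat `H ⊆ F^d` is algebraically spread on `H`,
via an affine parameterization of `H`. -/
def SpreadOnFlat (F : Type*) [Field F] (d r : ℕ) (H P : Set (Fin d → F)) : Prop :=
  ∃ φ : (Fin r → F) →ᵃ[F] (Fin d → F),
    Function.Injective φ ∧ Set.range φ = H ∧ P ⊆ H ∧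
    AlgebraicallySpread F r (φ ⁻¹' P)

/-- `ℓ ⊆ F^d` is a line. -/
def IsLine {F : Type*} [Field F] {d : ℕ} (ℓ : Set (Fin d → F)) : Prop :=
  ∃ x₀ b : Fin d → F, b ≠ 0 ∧ ℓ = {y | ∃ t : F, y = x₀ + t • b}

/-- A set of lines `L` in `F^d` is algebraically spread: some hyperplane `H` meets the lines
of `L` in pairwise distinct single points forming an algebraically spread point set on `H`. -/
def SpreadLines (F : Type*) [Field F] (d : ℕ) (L : Set (Set (Fin d → F))) : Prop :=
  ∃ (H : Set (Fin d → F)) (pt : Set (Fin d → F) → (Fin d → F)),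
    (∀ ℓ ∈ L, ℓ ∩ H = {pt ℓ}) ∧ Set.InjOn pt L ∧
    SpreadOnFlat F d (d - 1) H (pt '' L)

/-- Restriction of `f` to the line `t ↦ x₀ + t • b`, as a univariate polynomial. -/
noncomputable def restrictLine {F : Type*} [CommSemiring F] {d : ℕ}
    (f : MvPolynomial (Fin d) F) (x₀ b : Fin d → F) : Polynomial F :=
  MvPolynomial.eval₂ Polynomial.C
    (fun i => Polynomial.C (x₀ i) + Polynomial.C (b i) * Polynomial.X) f

/-- `f` vanishes to order `(u,v;γ)` at `p` along the line `t ↦ x₀ + t • b`. -/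
def VanishesToOrderAlong {F : Type*} [Field F] {d : ℕ}
    (f : MvPolynomial (Fin d) F) (u v γ : ℝ)
    (x₀ b : Fin d → F) (p : Fin d → F) : Prop :=
  ∀ t₀ : F, x₀ + t₀ • b = p →
    ∀ α : Fin d →₀ ℕ, (∀ i : Fin d, (i : ℕ) = d - 1 → α i = 0) →
      ((∑ i, α i : ℕ) : ℝ) < u →
      (Polynomial.X - Polynomial.C t₀) ^ ⌈v - ((∑ i, α i : ℕ) : ℝ) / γ⌉₊ ∣
        restrictLine (mvHasseDeriv α f) x₀ b

/-- Membership in `V(r,s)`, the span of monomials `x^α` with `α_1 + ⋯ + α_{d-1} < r`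
and `|α| < s`. -/
def MemV {F : Type*} [Field F] {d : ℕ} (r s : ℝ) (f : MvPolynomial (Fin d) F) : Prop :=
  ∀ α : Fin d →₀ ℕ, MvPolynomial.coeff α f ≠ 0 →
    ((∑ i ∈ Finset.univ.filter fun i : Fin d => (i : ℕ) < d - 1, α i : ℕ) : ℝ) < r ∧
    ((∑ i, α i : ℕ) : ℝ) < s

/-- A Zariski-closed subset of the affine space `F^ι`: the common zero locus of a set of
polynomials. -/
def ZarClosed {F : Type*} [CommSemiring F] {ι : Type*} (Z : Set (ι → F)) : Prop :=
  ∃ S : Set (MvPolynomial ι F), Z = {x | ∀ g ∈ S, MvPolynomial.eval x g = 0}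

open MvPolynomial in
lemma hasse_map {F F' : Type*} [CommSemiring F] [CommSemiring F'] {d : ℕ}
    (ρ : F →+* F') (α : Fin d →₀ ℕ) (g : MvPolynomial (Fin d) F) :
    mvHasseDeriv α (MvPolynomial.map ρ g) = MvPolynomial.map ρ (mvHasseDeriv α g) := by
  unfold mvHasseDeriv
  rw [eval₂_map, ← coeff_map]
  congr 1
  rw [eval₂_comp_left (map (map ρ)) (C.comp C) (fun i => X i + C (X i)) g]
  congr 1
  · ext a : 1
    simp
  · funext i
    simp

open MvPolynomial in
lemma hasse_C_mul {F : Type*} [CommSemiring F] {d : ℕ}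
    (α : Fin d →₀ ℕ) (c : F) (g : MvPolynomial (Fin d) F) :
    mvHasseDeriv α (C c * g) = C c * mvHasseDeriv α g := by
  unfold mvHasseDeriv
  rw [eval₂_mul, eval₂_C]
  simp [coeff_C_mul]

open MvPolynomial in
lemma hasse_sum {F : Type*} [CommSemiring F] {d : ℕ} {J : Type*} (s : Finset J)
    (α : Fin d →₀ ℕ) (h : J → MvPolynomial (Fin d) F) :
    mvHasseDeriv α (∑ j ∈ s, h j) = ∑ j ∈ s, mvHasseDeriv α (h j) := by
  unfold mvHasseDeriv
  rw [show (eval₂ (C.comp C) (fun i => X i + C (X i)) (∑ j ∈ s, h j) : MvPolynomial (Fin d) (MvPolynomial (Fin d) F)) = ∑ j ∈ s, eval₂ (C.comp C) (fun i => X i + C (X i)) (h j) from map_sum (eval₂Hom (C.comp C) fun i => X i + C (X i)) _ _, coeff_sum]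

open MvPolynomial in
lemma eval_map_point {F F' : Type*} [CommSemiring F] [CommSemiring F'] {d : ℕ}
    (ρ : F →+* F') (p : Fin d → F) (g : MvPolynomial (Fin d) F) :
    MvPolynomial.eval (fun i => ρ (p i)) (MvPolynomial.map ρ g) = ρ (MvPolynomial.eval p g) := by
  rw [eval_map]
  rw [show (MvPolynomial.eval p g) = eval₂ (RingHom.id F) p g from rfl,
    eval₂_comp_left ρ (RingHom.id F) p g]
  rfl

open MvPolynomial in
lemma spread_extend {F F' : Type*} [Field F] [Field F'] [Algebra F F'] {r : ℕ}
    {Q : Set (Fin r → F)} (h : AlgebraicallySpread F r Q) :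
    AlgebraicallySpread F' r ((fun q (i : Fin r) => algebraMap F F' (q i)) '' Q) := by
  set ρ : F →+* F' := algebraMap F F' with hρ
  have hιinj : Function.Injective (fun (q : Fin r → F) (i : Fin r) => ρ (q i)) := by
    intro a b hab
    funext i
    exact (algebraMap F F').injective (congrFun hab i)
  have hncard : ((fun (q : Fin r → F) (i : Fin r) => ρ (q i)) '' Q).ncard = Q.ncard :=
    Set.ncard_image_of_injective Q hιinj
  refine ⟨h.1.image _, fun ε hε => ?_⟩
  obtain ⟨n₀, hn₀⟩ := h.2 ε hε
  refine ⟨n₀, fun n hn f hdeg hmult => ?_⟩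
  -- decompose f
  have hmem : ∀ γ : Fin r →₀ ℕ,
      f.coeff γ ∈ Submodule.span F (Set.range fun β : f.support => f.coeff β) := by
    intro γ
    by_cases hγ : γ ∈ f.support
    · exact Submodule.subset_span ⟨⟨γ, hγ⟩, rfl⟩
    · rw [MvPolynomial.notMem_support_iff.mp hγ]; exact Submodule.zero_mem _
  set W := Submodule.span F (Set.range fun β : f.support => f.coeff β) with hW
  haveI : FiniteDimensional F W := by
    apply FiniteDimensional.span_of_finite
    exact Set.finite_range _
  set m := Module.finrank F W
  set e : Module.Basis (Fin m) F W := Module.finBasis F W with he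
  set wc : (Fin r →₀ ℕ) → W := fun γ => ⟨f.coeff γ, hmem γ⟩ with hwc
  set g : Fin m → MvPolynomial (Fin r) F :=
    fun j => ∑ γ ∈ f.support, monomial γ (e.repr (wc γ) j) with hg
  have hcoeffg : ∀ j γ, coeff γ (g j) = e.repr (wc γ) j := by
    intro j γ
    rw [hg]
    simp only [coeff_sum, coeff_monomial]
    rw [Finset.sum_ite_eq' f.support γ (fun γ' => e.repr (wc γ') j)]
    by_cases hγ : γ ∈ f.support
    · simp [hγ]
    · have : wc γ = 0 := by
        apply Subtype.ext
        exact MvPolynomial.notMem_support_iff.mp hγ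
      simp [hγ, this]
  have hf : f = ∑ j, C ((e j : F')) * MvPolynomial.map ρ (g j) := by
    apply MvPolynomial.ext
    intro γ
    rw [coeff_sum]
    have : ∀ j, coeff γ (C ((e j : F')) * MvPolynomial.map ρ (g j))
        = e.repr (wc γ) j • ((e j : F')) := by
      intro j
      rw [coeff_C_mul, coeff_map, hcoeffg, Algebra.smul_def, mul_comm]
    simp_rw [this]
    have := congrArg (Submodule.subtype W) (Module.Basis.sum_repr e (wc γ))
    rw [map_sum] at this
    simpa using this.symm
  have hli : LinearIndependent F (fun j => ((e j : F'))) :=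
    e.linearIndependent.map' W.subtype W.ker_subtype
  have hgz : ∀ j, g j = 0 := by
    intro j
    apply hn₀ n hn
    · -- degree bound
      refine lt_of_le_of_lt ?_ (by rwa [hncard] at hdeg)
      have hsub : (g j).support ⊆ f.support := by
        intro γ hγ
        by_contra hγf
        have : wc γ = 0 := by
          apply Subtype.ext
          exact MvPolynomial.notMem_support_iff.mp hγf
        exact (MvPolynomial.mem_support_iff.mp hγ) (by rw [hcoeffg, this, map_zero]; rfl)
      exact_mod_cast Finset.sup_mono hsub
    · intro q hq α hα
      have h0 := hmult _ (Set.mem_image_of_mem _ hq) α hα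
      rw [hf, hasse_sum] at h0
      simp_rw [hasse_C_mul, hasse_map] at h0
      rw [map_sum] at h0
      simp_rw [eval_mul, eval_C, eval_map_point ρ q] at h0
      have h0' : ∑ j', (eval q (mvHasseDeriv α (g j'))) • ((e j' : F')) = 0 := by
        rw [← h0]
        congr 1
        funext j'
        rw [Algebra.smul_def, mul_comm]
      exact (Fintype.linearIndependent_iff.mp hli) _ h0' j
  rw [hf]
  simp [hgz]

open Matrix

/-- An algebraically spread set of lines in `F^d` remains algebraically spread when viewed
inside `(F')^d`, for any field extension `F'` of `F`; here the line `ℓ` viewed inside `(F')^d`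
is the affine span over `F'` of the image of `ℓ` under the coordinatewise embedding. -/
theorem spreadLines_of_fieldExtension
    (F : Type) [Field F] (F' : Type) [Field F'] [Algebra F F']
    (d : ℕ) (hd : 2 ≤ d)
    (L : Set (Set (Fin d → F))) (hLfin : L.Finite) (hlines : ∀ ℓ ∈ L, IsLine ℓ)
    (hspread : SpreadLines F d L) :
    SpreadLines F' d
      ((fun ℓ => ((affineSpan F' ((fun x => fun i => algebraMap F F' (x i)) '' ℓ) :
          AffineSubspace F' (Fin d → F')) : Set (Fin d → F'))) '' L) := by
  classical
  set ρ : F →+* F' := algebraMap F F' with hρdef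
  set em : (Fin d → F) → (Fin d → F') := fun x i => ρ (x i) with hem
  set emr : (Fin (d-1) → F) → (Fin (d-1) → F') := fun x i => ρ (x i) with hemr
  have heminj : Function.Injective em := by
    intro a b hab
    funext i
    exact (algebraMap F F').injective (congrFun hab i)
  obtain ⟨H, pt, hint, hinjpt, φ, hφinj, hφrange, hptH, hQspread⟩ := hspread
  have hlininj : Function.Injective φ.linear := φ.linear_injective_iff.mpr hφinj
  set M : Matrix (Fin d) (Fin (d-1)) F := LinearMap.toMatrix' φ.linear with hM
  set M' : Matrix (Fin d) (Fin (d-1)) F' := M.map ρ with hM'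
  have hMx : ∀ x, M *ᵥ x = φ.linear x := by
    intro x
    rw [← Matrix.toLin'_apply, hM, Matrix.toLin'_toMatrix']
  have hφeq : ∀ x, φ x = φ.linear x + φ 0 := by
    intro x
    have := φ.map_vadd (0 : Fin (d-1) → F) x
    simpa using this
  set φ' : (Fin (d-1) → F') →ᵃ[F'] (Fin d → F') :=
    { toFun := fun x => M' *ᵥ x + em (φ 0)
      linear := M'.mulVecLin
      map_vadd' := by
        intro p v
        show M' *ᵥ (v + p) + em (φ 0) = M' *ᵥ v + (M' *ᵥ p + em (φ 0))
        rw [Matrix.mulVec_add]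
        abel } with hφ'
  have hφ'app : ∀ x, φ' x = M' *ᵥ x + em (φ 0) := fun _ => rfl
  have hcomm : ∀ x : Fin (d-1) → F, φ' (emr x) = em (φ x) := by
    intro x
    rw [hφ'app]
    funext i
    have h1 : (M' *ᵥ emr x) i = ρ ((M *ᵥ x) i) := (RingHom.map_mulVec ρ M x i).symm
    have h2 : em (φ x) i = ρ (φ.linear x i + φ 0 i) := by
      rw [hφeq x]; rfl
    rw [Pi.add_apply, h1, h2, map_add, hMx]
  obtain ⟨gL, hgL⟩ := φ.linear.exists_leftInverse_of_injective (LinearMap.ker_eq_bot.mpr hlininj)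
  set P : Matrix (Fin (d-1)) (Fin d) F := LinearMap.toMatrix' gL with hP
  have hPM : P * M = 1 := by
    rw [hP, hM, ← LinearMap.toMatrix'_comp, hgL, LinearMap.toMatrix'_id]
  have hM'inj : ∀ w : Fin (d-1) → F', M' *ᵥ w = 0 → w = 0 := by
    intro w hw
    have : (P.map ρ * M') *ᵥ w = w := by
      rw [hM', ← Matrix.map_mul, hPM, Matrix.map_one ρ (map_zero ρ) (map_one ρ),
        Matrix.one_mulVec]
    rw [← this, ← Matrix.mulVec_mulVec, hw, Matrix.mulVec_zero]
  have hφ'inj : Function.Injective φ' := by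
    intro x y hxy
    rw [hφ'app, hφ'app, add_left_inj] at hxy
    have : M' *ᵥ (x - y) = 0 := by rw [Matrix.mulVec_sub, hxy, sub_self]
    have := hM'inj _ this
    exact sub_eq_zero.mp this
  -- key per-line lemma
  have hkeyall : ∀ ℓ ∈ L, (affineSpan F' (em '' ℓ) : Set (Fin d → F')) ∩ Set.range ⇑φ'
      = {em (pt ℓ)} := by
    intro ℓ hℓ
    obtain ⟨x₀, b, hb, hℓeq⟩ := hlines ℓ hℓ
    have hptmem : pt ℓ ∈ ℓ ∩ H := by
      rw [hint ℓ hℓ]; rfl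
    obtain ⟨q₀, hq₀⟩ : ∃ q₀, φ q₀ = pt ℓ := by
      have := hptmem.2
      rw [← hφrange] at this
      exact this
    obtain ⟨t₀, ht₀⟩ : ∃ t₀ : F, pt ℓ = x₀ + t₀ • b := by
      have h : pt ℓ ∈ {y | ∃ t : F, y = x₀ + t • b} := by
        rw [← hℓeq]; exact hptmem.1
      exact h
    -- b is not in the range of the linear part
    have hbnr : ∀ w, φ.linear w ≠ b := by
      intro w hw
      have hmem : φ (w + q₀) ∈ ℓ ∩ H := by
        constructor
        · have : φ (w + q₀) = x₀ + (t₀ + 1) • b := by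
            have h1 : φ (w +ᵥ q₀) = φ.linear w +ᵥ φ q₀ := φ.map_vadd q₀ w
            have h2 : φ (w + q₀) = b + pt ℓ := by
              rw [← hq₀, ← hw]
              exact h1
            rw [h2, ht₀, add_smul, one_smul]
            abel
          rw [hℓeq]
          exact ⟨t₀ + 1, this⟩
        · rw [← hφrange]; exact ⟨w + q₀, rfl⟩
      rw [hint ℓ hℓ] at hmem
      have h3 : b + pt ℓ = pt ℓ := by
        have h1 : φ (w +ᵥ q₀) = φ.linear w +ᵥ φ q₀ := φ.map_vadd q₀ w
        have h2 : φ (w + q₀) = b + pt ℓ := by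
          rw [← hq₀, ← hw]; exact h1
        rw [← h2]; exact hmem
      exact hb (add_eq_right.mp h3)
    have hbnr' : b ∉ LinearMap.range φ.linear := by
      rintro ⟨w, hw⟩
      exact hbnr w hw
    -- a dual functional vanishing on the range and sending b to 1
    obtain ⟨ξ, hξb, hξW⟩ : ∃ ξ : Module.Dual F (Fin d → F),
        ξ b = 1 ∧ ∀ w, ξ (φ.linear w) = 0 := by
      set W := LinearMap.range φ.linear with hWdef
      have hmk : (Submodule.Quotient.mk b : (Fin d → F) ⧸ W) ≠ 0 := fun h =>
        hbnr' ((Submodule.Quotient.mk_eq_zero W).mp h)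
      have : ¬ (∀ η : Module.Dual F ((Fin d → F) ⧸ W), η (Submodule.Quotient.mk b) = 0) := by
        rw [Module.forall_dual_apply_eq_zero_iff F]
        exact hmk
      push_neg at this
      obtain ⟨η₀, hη₀⟩ := this
      refine ⟨(η₀ (Submodule.Quotient.mk b))⁻¹ • (η₀.comp W.mkQ), ?_, ?_⟩
      · simp only [LinearMap.smul_apply, LinearMap.comp_apply, Submodule.mkQ_apply]
        exact inv_mul_cancel₀ hη₀
      · intro w
        simp only [LinearMap.smul_apply, LinearMap.comp_apply, Submodule.mkQ_apply]
        have : (Submodule.Quotient.mk (φ.linear w) : (Fin d → F) ⧸ W) = 0 :=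
          (Submodule.Quotient.mk_eq_zero W).mpr ⟨w, rfl⟩
        rw [this, map_zero, smul_zero]
    set rv : Fin d → F := fun i => ξ (Pi.single i 1) with hrv
    have hydecomp : ∀ y : Fin d → F, y = ∑ i, y i • (Pi.single i (1:F) : Fin d → F) := by
      intro y
      funext j
      rw [Finset.sum_apply]
      have h1 : ∀ i, (y i • (Pi.single i (1:F) : Fin d → F)) j
          = if j = i then y i else 0 := by
        intro i
        by_cases h : j = i <;> simp [Pi.single_apply, h]
      simp only [h1]
      simp
    have hrd : ∀ y : Fin d → F, rv ⬝ᵥ y = ξ y := by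
      intro y
      conv_rhs => rw [hydecomp y]
      rw [map_sum, dotProduct]
      refine Finset.sum_congr rfl fun i _ => ?_
      rw [ξ.map_smul, smul_eq_mul, mul_comm]
    -- the key linear independence statement over F'
    have hkey : ∀ (w : Fin (d-1) → F') (c : F'), M' *ᵥ w + c • (em b) = 0 → w = 0 ∧ c = 0 := by
      intro w c h0
      set rv' : Fin d → F' := fun i => ρ (rv i) with hrv'
      have hA : rv' ⬝ᵥ (M' *ᵥ w) = 0 := by
        rw [Matrix.dotProduct_mulVec]
        have hvM : rv ᵥ* M = 0 := by
          funext j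
          have hcol : (fun i => M i j) = φ.linear (Pi.single j 1) := by
            rw [← hMx]
            have := Matrix.mulVec_single M j (1 : F)
            rw [this]
            funext i
            simp
          show rv ⬝ᵥ (fun i => M i j) = 0
          rw [hcol, hrd, hξW]
        have hvM' : rv' ᵥ* M' = 0 := by
          funext j
          show ((ρ ∘ rv) ᵥ* M.map ρ) j = 0
          rw [← RingHom.map_vecMul ρ M rv j, hvM]
          simp
        rw [hvM', zero_dotProduct]
      have hB : rv' ⬝ᵥ em b = 1 := by
        have : rv' ⬝ᵥ em b = ρ (rv ⬝ᵥ b) := by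
          rw [RingHom.map_dotProduct]
          rfl
        rw [this, hrd, hξb, _root_.map_one]
      have hc : c = 0 := by
        have := congrArg (fun y => rv' ⬝ᵥ y) h0
        simp only [dotProduct_add, dotProduct_zero, dotProduct_smul] at this
        rw [hA, hB] at this
        simpa using this
      refine ⟨?_, hc⟩
      rw [hc, zero_smul, add_zero] at h0
      exact hM'inj _ h0
    -- membership characterization of the extended line
    have hspanle : ∀ y ∈ (affineSpan F' (em '' ℓ) : Set (Fin d → F')),
        ∃ s : F', y = em x₀ + s • em b := by
      intro y hy
      have h1 : affineSpan F' (em '' ℓ) ≤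
          AffineSubspace.mk' (em x₀) (Submodule.span F' {em b}) := by
        rw [affineSpan_le]
        rintro z ⟨x, hx, rfl⟩
        rw [hℓeq] at hx
        obtain ⟨t, rfl⟩ := hx
        have hz : em (x₀ + t • b) = em x₀ + ρ t • em b := by
          funext i
          show ρ (x₀ i + t * b i) = ρ (x₀ i) + ρ t * ρ (b i)
          rw [map_add, _root_.map_mul]
        rw [SetLike.mem_coe, AffineSubspace.mem_mk', hz]
        have : em x₀ + ρ t • em b -ᵥ em x₀ = ρ t • em b := by
          rw [vsub_eq_sub]
          abel
        rw [this]
        exact Submodule.smul_mem _ _ (Submodule.mem_span_singleton_self _)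
      have h2 : y ∈ AffineSubspace.mk' (em x₀) (Submodule.span F' {em b}) := h1 hy
      rw [AffineSubspace.mem_mk'] at h2
      obtain ⟨s, hs⟩ := Submodule.mem_span_singleton.mp h2
      refine ⟨s, ?_⟩
      have hs' : y -ᵥ em x₀ = s • em b := hs.symm
      rw [vsub_eq_sub] at hs'
      rw [← hs']
      abel
    -- the intersection is the singleton
    have hptform : em (pt ℓ) = em x₀ + ρ t₀ • em b := by
      rw [ht₀]
      funext i
      show ρ (x₀ i + t₀ * b i) = ρ (x₀ i) + ρ t₀ * ρ (b i)
      rw [map_add, _root_.map_mul]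
    rw [Set.eq_singleton_iff_unique_mem]
    constructor
    · constructor
      · exact subset_affineSpan F' _ ⟨pt ℓ, hptmem.1, rfl⟩
      · exact ⟨emr q₀, by rw [hcomm, hq₀]⟩
    · rintro y ⟨hy1, q, hq2⟩
      obtain ⟨s, hs⟩ := hspanle y hy1
      have e1 : y - em (pt ℓ) = (s - ρ t₀) • em b := by
        rw [hs, hptform, sub_smul]
        abel
      have e2 : y - em (pt ℓ) = M' *ᵥ (q - emr q₀) := by
        have hy2 : y = M' *ᵥ q + em (φ 0) := by rw [← hq2]; rfl
        have hpt2 : em (pt ℓ) = M' *ᵥ emr q₀ + em (φ 0) := by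
          rw [← hq₀, ← hcomm]; rfl
        rw [hy2, hpt2, Matrix.mulVec_sub]
        abel
      have e3 : M' *ᵥ (q - emr q₀) + (ρ t₀ - s) • em b = 0 := by
        rw [show ρ t₀ - s = -(s - ρ t₀) by ring, neg_smul, ← e1, ← e2]
        abel
      obtain ⟨_, h5⟩ := hkey _ _ e3
      have hst : s = ρ t₀ := by
        have := sub_eq_zero.mp h5
        exact this.symm
      rw [hs, hst, ← hptform]
  -- assemble
  set H' : Set (Fin d → F') := Set.range ⇑φ' with hH'
  set ext : Set (Fin d → F) → Set (Fin d → F') :=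
    fun ℓ => ((affineSpan F' (em '' ℓ) : AffineSubspace F' (Fin d → F')) : Set (Fin d → F'))
    with hext
  set pt' : Set (Fin d → F') → (Fin d → F') :=
    fun S => if h : ∃ p, S ∩ H' = {p} then h.choose else 0 with hpt'def
  have hpt' : ∀ ℓ ∈ L, pt' (ext ℓ) = em (pt ℓ) := by
    intro ℓ hℓ
    have hex : ∃ p, ext ℓ ∩ H' = {p} := ⟨em (pt ℓ), hkeyall ℓ hℓ⟩
    rw [hpt'def]
    simp only [hex, dif_pos]
    have h2 : ({hex.choose} : Set (Fin d → F')) = {em (pt ℓ)} :=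
      hex.choose_spec.symm.trans (hkeyall ℓ hℓ)
    exact Set.singleton_eq_singleton_iff.mp h2
  refine ⟨H', pt', ?_, ?_, ?_⟩
  · rintro S ⟨ℓ, hℓ, rfl⟩
    rw [hpt' ℓ hℓ]
    exact hkeyall ℓ hℓ
  · rintro S₁ ⟨ℓ₁, h₁, rfl⟩ S₂ ⟨ℓ₂, h₂, rfl⟩ heq
    rw [hpt' ℓ₁ h₁, hpt' ℓ₂ h₂] at heq
    rw [hinjpt h₁ h₂ (heminj heq)]
  · have himg : pt' '' (ext '' L) = em '' (pt '' L) := by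
      rw [← Set.image_comp, ← Set.image_comp]
      exact Set.image_congr fun ℓ hℓ => hpt' ℓ hℓ
    have hpre : (⇑φ') ⁻¹' (em '' (pt '' L)) = emr '' (⇑φ ⁻¹' (pt '' L)) := by
      ext q'
      constructor
      · intro hq'
        obtain ⟨p, hp, heq⟩ := hq'
        have hpH : p ∈ H := hptH hp
        rw [← hφrange] at hpH
        obtain ⟨q, hq⟩ := hpH
        have : φ' (emr q) = φ' q' := by rw [hcomm, hq, heq]
        refine ⟨q, ?_, hφ'inj this⟩
        show φ q ∈ pt '' L
        rw [hq]
        exact hp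
      · rintro ⟨q, hq, rfl⟩
        show φ' (emr q) ∈ em '' (pt '' L)
        rw [hcomm]
        exact ⟨φ q, hq, rfl⟩
    refine ⟨φ', hφ'inj, rfl, ?_, ?_⟩
    · rw [himg]
      rintro _ ⟨p, hp, rfl⟩
      have hpH : p ∈ H := hptH hp
      rw [← hφrange] at hpH
      obtain ⟨q, hq⟩ := hpH
      exact ⟨emr q, by rw [hcomm, hq]⟩
    · rw [himg, hpre]
      exact spread_extend hQspread
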